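/- For all n ≥ 1, the element u_n := −(t + t⁻¹)^{n−1}(t² − 1) d/dt of the Witt algebra satisfies u_n = O_n + Σ_{k=1}^{⌊n/2⌋} binom(n,k)·(1 − 2k/n)·O_{n−2k}, where O_0 := 0 and binom(n,k)·(1 − 2k/n) = binom(n−1,k) − binom(n−1,k−1) is an integer. -/

import Mathlib

/-- Let `k` be a field of characteristic zero and `W` the Witt algebra (basis `L n`, `n : ℤ`,
`⁅L n, L m⁆ = (n-m) • L (n+m)`); set `O_n := L n - L (-n)` (so `O_0 = 0` automatically).
For `n ≥ 1` the element `u_n := −(t + t⁻¹)^{n−1}(t² − 1) d/dt` of `W` expands in the basis `L`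
as `u n = Σ_{j<n} C(n−1,j) • (L (n−2j) − L (n−2j−2))` (hypothesis `hu`).  Then for all `n ≥ 1`,
`u n = O_n + Σ_{j=1}^{⌊n/2⌋} C(n,j)(1 − 2j/n) • O_{n−2j}`, and each coefficient
`C(n,j)(1 − 2j/n)` equals the integer `C(n−1,j) − C(n−1,j−1)`. -/
theorem u_n_in_terms_of_O_basis
    {k : Type*} [Field k] [CharZero k]
    {W : Type*} [LieRing W] [LieAlgebra k W]
    (L : ℤ → W)
    (hLindep : LinearIndependent k L)
    (hLspan : Submodule.span k (Set.range L) = ⊤)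
    (hLbracket : ∀ n m : ℤ, ⁅L n, L m⁆ = ((n - m : ℤ) : k) • L (n + m))
    (u : ℕ → W)
    (hu : ∀ n : ℕ, u n = ∑ j ∈ Finset.range n,
      (((n - 1).choose j : ℕ) : k) • (L ((n : ℤ) - 2 * j) - L ((n : ℤ) - 2 * j - 2))) :
    ∀ n : ℕ, 1 ≤ n →
      (u n = (L (n : ℤ) - L (-(n : ℤ))) +
        ∑ j ∈ Finset.Icc 1 (n / 2),
          ((n.choose j : k) * (1 - 2 * (j : k) / (n : k))) •
            (L ((n : ℤ) - 2 * j) - L (-((n : ℤ) - 2 * j)))) ∧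
      ∀ j ∈ Finset.Icc 1 (n / 2),
        (n.choose j : k) * (1 - 2 * (j : k) / (n : k)) =
          (((n - 1).choose j : ℕ) : k) - (((n - 1).choose (j - 1) : ℕ) : k) := by
  intro n hn
  obtain ⟨m, rfl⟩ : ∃ m, n = m + 1 := ⟨n - 1, by omega⟩
  simp only [Nat.add_sub_cancel]
  set c : ℕ → k := fun j => 2 * (m.choose j : k) - ((m + 1).choose j : k) with hc
  have pascal : ∀ j : ℕ, (m + 1).choose (j + 1) = m.choose j + m.choose (j + 1) :=
    fun j => Nat.choose_succ_succ m j
  have pascalk : ∀ j : ℕ, (((m + 1).choose (j + 1) : ℕ) : k)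
      = (m.choose j : k) + (m.choose (j + 1) : k) := by
    intro j; exact_mod_cast congrArg (Nat.cast : ℕ → k) (pascal j)
  -- coefficient identity (second conjunct)
  have hcoef : ∀ j ∈ Finset.Icc 1 ((m + 1) / 2),
      (((m + 1).choose j : ℕ) : k) * (1 - 2 * (j : k) / ((m + 1 : ℕ) : k))
        = ((m.choose j : ℕ) : k) - ((m.choose (j - 1) : ℕ) : k) := by
    intro j hj
    simp only [Finset.mem_Icc] at hj
    obtain ⟨i, rfl⟩ : ∃ i, j = i + 1 := ⟨j - 1, by omega⟩
    have key2 : (m + 1) * m.choose i = (m + 1).choose (i + 1) * (i + 1) :=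
      Nat.add_one_mul_choose_eq m i
    have key2k : ((m + 1 : ℕ) : k) * (m.choose i : k)
        = (((m + 1).choose (i + 1) : ℕ) : k) * ((i + 1 : ℕ) : k) := by
      exact_mod_cast congrArg (Nat.cast : ℕ → k) key2
    have pk := pascalk i
    simp only [Nat.add_sub_cancel]
    push_cast at key2k pk ⊢
    have hm0 : (m : k) + 1 ≠ 0 := by
      have : ((m + 1 : ℕ) : k) ≠ 0 := Nat.cast_ne_zero.mpr (by omega)
      push_cast at this; exact this
    field_simp
    linear_combination ((m : k) + 1) * pk + 2 * key2k
  -- c agrees with the integer coefficients on the relevant range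
  have hcc : ∀ j ∈ Finset.Icc 1 ((m + 1) / 2),
      c j = ((m.choose j : ℕ) : k) - ((m.choose (j - 1) : ℕ) : k) := by
    intro j hj
    simp only [Finset.mem_Icc] at hj
    obtain ⟨i, rfl⟩ : ∃ i, j = i + 1 := ⟨j - 1, by omega⟩
    simp only [hc, Nat.add_sub_cancel]
    linear_combination - pascalk i
  -- Step A : expansion of u in the L basis over range (m+2)
  have hA : u (m + 1) = ∑ j ∈ Finset.range (m + 2), c j • L ((m : ℤ) + 1 - 2 * j) := by
    rw [hu (m + 1)]
    simp only [Nat.add_sub_cancel]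
    have e1 : ∑ j ∈ Finset.range (m + 2), (m.choose j : k) • L ((m : ℤ) + 1 - 2 * j)
        = ∑ j ∈ Finset.range (m + 1), (m.choose j : k) • L ((m : ℤ) + 1 - 2 * j) := by
      rw [Finset.sum_range_succ]
      simp [Nat.choose_eq_zero_of_lt]
    have e2 : ∑ j ∈ Finset.range (m + 2),
          (((m + 1).choose j : k) - (m.choose j : k)) • L ((m : ℤ) + 1 - 2 * j)
        = ∑ j ∈ Finset.range (m + 1), (m.choose j : k) • L ((m : ℤ) + 1 - 2 * (j + 1)) := by
      rw [Finset.sum_range_succ' (fun j =>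
        (((m + 1).choose j : k) - (m.choose j : k)) • L ((m : ℤ) + 1 - 2 * j)) (m + 1)]
      have h0 : (((m + 1).choose 0 : k) - (m.choose 0 : k)) • L ((m : ℤ) + 1 - 2 * (0 : ℕ)) = 0 := by
        simp
      rw [h0, add_zero]
      refine Finset.sum_congr rfl fun j _ => ?_
      have hco : ((m + 1).choose (j + 1) : k) - (m.choose (j + 1) : k) = (m.choose j : k) := by
        linear_combination pascalk j
      rw [hco]
      congr 2
      all_goals push_cast
      all_goals try ring
    have step : ∀ j ∈ Finset.range (m + 2), c j • L ((m : ℤ) + 1 - 2 * j)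
        = (m.choose j : k) • L ((m : ℤ) + 1 - 2 * j)
          - (((m + 1).choose j : k) - (m.choose j : k)) • L ((m : ℤ) + 1 - 2 * j) := by
      intro j _
      rw [← sub_smul]; congr 1; simp only [hc]; ring
    rw [Finset.sum_congr rfl step, Finset.sum_sub_distrib, e1, e2, ← Finset.sum_sub_distrib]
    refine Finset.sum_congr rfl fun j _ => ?_
    rw [← smul_sub]
    congr 2
    push_cast
    ring
  -- antisymmetry of c
  have hanti : ∀ i ≤ m + 1, c ((m + 1) - i) = - c i := by
    intro i hi
    rcases Nat.eq_zero_or_pos i with h0 | h1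
    · subst h0
      simp only [hc, Nat.sub_zero, Nat.choose_self, Nat.choose_zero_right,
        Nat.choose_eq_zero_of_lt (by omega : m < m + 1)]
      push_cast; ring
    · obtain ⟨i', rfl⟩ : ∃ i', i = i' + 1 := ⟨i - 1, by omega⟩
      have e : (m + 1) - (i' + 1) = m - i' := by omega
      have h3 : m.choose (m - i') = m.choose i' := Nat.choose_symm (by omega)
      have h4 : (m + 1).choose (m - i') = (m + 1).choose (i' + 1) := by
        have h5 : m - i' = (m + 1) - (i' + 1) := by omega
        rw [h5]; exact Nat.choose_symm (by omega)
      simp only [hc, e, h3, h4]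
      linear_combination (-2 : k) * pascalk i'
  -- middle coefficient vanishes when m+1 is even
  have hmid : (m + 1) % 2 = 0 → c ((m + 1) / 2) = 0 := by
    intro hev
    obtain ⟨q, hq⟩ : ∃ q, m + 1 = 2 * q := ⟨(m + 1) / 2, by omega⟩
    have hq2 : (m + 1) / 2 = q := by omega
    obtain ⟨i, rfl⟩ : ∃ i, q = i + 1 := ⟨q - 1, by omega⟩
    have hsym : m.choose i = m.choose (i + 1) := by
      have h5 : m - (i + 1) = i := by omega
      calc m.choose i = m.choose (m - (i + 1)) := by rw [h5]
        _ = m.choose (i + 1) := Nat.choose_symm (by omega)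
    have hsymk : (m.choose i : k) = (m.choose (i + 1) : k) := by
      exact_mod_cast congrArg (Nat.cast : ℕ → k) hsym
    rw [hq2]
    simp only [hc]
    linear_combination (-1 : k) * pascalk i - hsymk
  -- Step B : fold the sum into O-basis terms
  have hB : ∑ j ∈ Finset.range (m + 2), c j • L ((m : ℤ) + 1 - 2 * j)
      = ∑ j ∈ Finset.range ((m + 1) / 2 + 1),
          c j • (L ((m : ℤ) + 1 - 2 * j) - L (-((m : ℤ) + 1 - 2 * j))) := by
    have hsplit : ∑ j ∈ Finset.range (m + 2), c j • L ((m : ℤ) + 1 - 2 * j)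
        = (∑ j ∈ Finset.range ((m + 1) / 2 + 1), c j • L ((m : ℤ) + 1 - 2 * j))
          + ∑ j ∈ Finset.Ico ((m + 1) / 2 + 1) (m + 2), c j • L ((m : ℤ) + 1 - 2 * j) := by
      rw [Finset.range_eq_Ico, Finset.range_eq_Ico,
        Finset.sum_Ico_consecutive _ (by omega : 0 ≤ (m + 1) / 2 + 1)
          (by omega : (m + 1) / 2 + 1 ≤ m + 2)]
    have e3 : ∑ j ∈ Finset.Ico ((m + 1) / 2 + 1) (m + 2), c j • L ((m : ℤ) + 1 - 2 * j)
        = ∑ i ∈ Finset.range ((m + 1) - (m + 1) / 2),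
            (- c i) • L (-((m : ℤ) + 1 - 2 * i)) := by
      refine Finset.sum_nbij' (fun j => (m + 1) - j) (fun i => (m + 1) - i) ?_ ?_ ?_ ?_ ?_
      · intro a ha
        simp only [Finset.mem_Ico] at ha
        simp only [Finset.mem_range]
        omega
      · intro a ha
        simp only [Finset.mem_range] at ha
        simp only [Finset.mem_Ico]
        omega
      · intro a ha
        simp only [Finset.mem_Ico] at ha
        show (m + 1) - ((m + 1) - a) = a
        omega
      · intro a ha
        simp only [Finset.mem_range] at ha
        show (m + 1) - ((m + 1) - a) = a
        omega
      · intro a ha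
        simp only [Finset.mem_Ico] at ha
        show c a • L ((m : ℤ) + 1 - 2 * a)
          = (- c ((m + 1) - a)) • L (-((m : ℤ) + 1 - 2 * ((m + 1 - a : ℕ) : ℤ)))
        rw [hanti a (by omega), neg_neg]
        congr 1
        have h6 : ((m + 1 - a : ℕ) : ℤ) = (m : ℤ) + 1 - a := by omega
        rw [h6]
        ring
    have e4 : ∑ i ∈ Finset.range ((m + 1) - (m + 1) / 2), (- c i) • L (-((m : ℤ) + 1 - 2 * i))
        = ∑ i ∈ Finset.range ((m + 1) / 2 + 1), (- c i) • L (-((m : ℤ) + 1 - 2 * i)) := by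
      rcases Nat.even_or_odd (m + 1) with he | ho
      · have hev : (m + 1) % 2 = 0 := Nat.even_iff.mp he
        have h1 : (m + 1) - (m + 1) / 2 = (m + 1) / 2 := by omega
        rw [h1, Finset.sum_range_succ, hmid hev]
        simp
      · have hod : (m + 1) % 2 = 1 := Nat.odd_iff.mp ho
        have h1 : (m + 1) - (m + 1) / 2 = (m + 1) / 2 + 1 := by omega
        rw [h1]
    rw [hsplit, e3, e4, ← Finset.sum_add_distrib]
    refine Finset.sum_congr rfl fun j _ => ?_
    rw [smul_sub, neg_smul]
    abel
  -- Step C : peel off the j = 0 term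
  have hC : ∑ j ∈ Finset.range ((m + 1) / 2 + 1),
        c j • (L ((m : ℤ) + 1 - 2 * j) - L (-((m : ℤ) + 1 - 2 * j)))
      = (L ((m : ℤ) + 1) - L (-((m : ℤ) + 1)))
        + ∑ j ∈ Finset.Icc 1 ((m + 1) / 2),
            c j • (L ((m : ℤ) + 1 - 2 * j) - L (-((m : ℤ) + 1 - 2 * j))) := by
    rw [Finset.sum_range_succ' (fun j =>
      c j • (L ((m : ℤ) + 1 - 2 * j) - L (-((m : ℤ) + 1 - 2 * j)))) ((m + 1) / 2)]
    have c0 : c 0 = 1 := by norm_num [hc]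
    rw [add_comm]
    congr 1
    · simp [c0]
    · refine Finset.sum_nbij' (fun i => i + 1) (fun j => j - 1) ?_ ?_ ?_ ?_ ?_
      · intro a ha
        simp only [Finset.mem_range] at ha
        simp only [Finset.mem_Icc]
        omega
      · intro a ha
        simp only [Finset.mem_Icc] at ha
        simp only [Finset.mem_range]
        omega
      · intro a _
        show a + 1 - 1 = a
        omega
      · intro a ha
        simp only [Finset.mem_Icc] at ha
        show a - 1 + 1 = a
        omega
      · intro a _
        rfl
  refine ⟨?_, hcoef⟩
  rw [hA, hB, hC]
  have hcastZ : ((m + 1 : ℕ) : ℤ) = (m : ℤ) + 1 := by push_cast; ring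
  rw [hcastZ]
  congr 1
  refine Finset.sum_congr rfl fun j hj => ?_
  rw [hcoef j hj, ← hcc j hj]
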